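/- Let S_Z be an orbital fuzzy iterated function system and u ∈ F*_S. Then the fuzzy set w_u := ∨_{x∈[u]^*} u_x is upper semicontinuous; together with normality and compact support this gives w_u ∈ F*_X. -/

import Mathlib

open Metric Filter Topology Set

/-- The orbit of a point `x` under the family of maps `f i`:
`x` together with all images of `x` under finite compositions of the `f i`. -/
def orbitIFS {X I : Type*} (f : I → X → X) (x : X) : Set X :=
  ⋃ l : List I, {l.foldr (fun i y => f i y) x}

/-- The fractal (Hutchinson–Barnsley) operator `K ↦ ⋃ i, f i '' K`. -/
def fractalOp {X I : Type*} (f : I → X → X) (K : Set X) : Set X :=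
  ⋃ i, f i '' K

/-- Image of a fuzzy set under a map: `f(u)(y) = sup_{x ∈ f⁻¹ y} u x` (0 if empty). -/
noncomputable def fuzzyImage {X : Type*} (g : X → X) (u : X → ℝ) : X → ℝ :=
  fun y => sSup (u '' (g ⁻¹' {y}))

/-- The fuzzy Hutchinson–Barnsley operator `Z(u) = ∨ i, ρ i (f i (u))`. -/
noncomputable def Zop {X I : Type*} (f : I → X → X) (ρ : I → ℝ → ℝ) (u : X → ℝ) : X → ℝ :=
  fun y => ⨆ i, ρ i (fuzzyImage (f i) u y)

/-- The metric `d_∞(u,v) = sup_{α ∈ (0,1]} h([u]^α, [v]^α)`. -/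
noncomputable def dInfty {X : Type*} [MetricSpace X] (u v : X → ℝ) : ℝ :=
  ⨆ α : Ioc (0:ℝ) 1, hausdorffDist {x | (α:ℝ) ≤ u x} {x | (α:ℝ) ≤ v x}

/-- The support of a fuzzy set: the closure of `{x | 0 < u x}`. -/
def fsupp {X : Type*} [MetricSpace X] (u : X → ℝ) : Set X := closure {x | 0 < u x}

/-- The crisp fuzzy point `δ_s`. -/
def fdelta {X : Type*} [DecidableEq X] (s : X) : X → ℝ := fun t => if t = s then 1 else 0

/-- `u^x` : the restriction of `u` to the closure of the orbit of `w` (zero outside). -/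
noncomputable def restrictO {X I : Type*} [MetricSpace X] (f : I → X → X) (u : X → ℝ)
    (w : X) : X → ℝ :=
  (closure (orbitIFS f w)).indicator u

/-- A normal compactly supported fuzzy set (with values in `[0,1]`). -/
def IsFuzzyN {X : Type*} [MetricSpace X] (u : X → ℝ) : Prop :=
  (∀ x, u x ∈ Icc (0:ℝ) 1) ∧ (∃ x, u x = 1) ∧ IsCompact (fsupp u)

/-- An upper semicontinuous normal compactly supported fuzzy set: membership in `F*_X`. -/
def IsFuzzyStar {X : Type*} [MetricSpace X] (u : X → ℝ) : Prop :=
  IsFuzzyN u ∧ UpperSemicontinuous u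

/-- Membership in `F*_S`: for each point of positive membership there is an orbit
containing it together with a point of membership one. -/
def InFS {X I : Type*} [MetricSpace X] (f : I → X → X) (u : X → ℝ) : Prop :=
  IsFuzzyStar u ∧ ∀ x, 0 < u x → ∃ w y, x ∈ orbitIFS f w ∧ y ∈ orbitIFS f w ∧ u y = 1

/-- The orbital contraction condition. -/
def OrbitalContr {X I : Type*} [MetricSpace X] (f : I → X → X) (C : ℝ) : Prop :=
  ∀ i x, ∀ y ∈ orbitIFS f x, ∀ z ∈ orbitIFS f x, dist (f i y) (f i z) ≤ C * dist y z

/-- An admissible system of grey level maps. -/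
def Admissible {I : Type*} (ρ : I → ℝ → ℝ) : Prop :=
  (∀ i, ρ i 0 = 0) ∧ (∀ i, MonotoneOn (ρ i) (Icc (0:ℝ) 1)) ∧
  (∀ i, ∀ t ∈ Icc (0:ℝ) 1, ContinuousWithinAt (ρ i) (Ici t) t) ∧
  (∀ i, ∀ t ∈ Icc (0:ℝ) 1, ρ i t ∈ Icc (0:ℝ) 1) ∧ (∃ j, ρ j 1 = 1)

namespace Stmt12Aux

set_option linter.unusedSectionVars false
set_option linter.unusedVariables false

variable {X I : Type*} [MetricSpace X] [DecidableEq X] [Finite I] [Nonempty I]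

/-- apply a word of maps -/
def word (f : I → X → X) (l : List I) (x : X) : X := l.foldr (fun i y => f i y) x

lemma mem_orbit_iff {f : I → X → X} {x y : X} :
    y ∈ orbitIFS f x ↔ ∃ l : List I, word f l x = y := by
  simp [orbitIFS, word, Set.mem_iUnion, eq_comm]

lemma word_mem_orbit (f : I → X → X) (l : List I) (x : X) : word f l x ∈ orbitIFS f x :=
  mem_orbit_iff.2 ⟨l, rfl⟩

lemma self_mem_orbit (f : I → X → X) (x : X) : x ∈ orbitIFS f x :=
  mem_orbit_iff.2 ⟨[], rfl⟩

lemma word_append (f : I → X → X) (l₁ l₂ : List I) (x : X) :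
    word f (l₁ ++ l₂) x = word f l₁ (word f l₂ x) := by
  simp [word, List.foldr_append]

lemma word_cons (f : I → X → X) (i : I) (l : List I) (x : X) :
    word f (i :: l) x = f i (word f l x) := rfl

lemma orbit_mono {f : I → X → X} {x y : X} (h : y ∈ orbitIFS f x) :
    orbitIFS f y ⊆ orbitIFS f x := by
  rcases mem_orbit_iff.1 h with ⟨m, rfl⟩
  intro z hz
  rcases mem_orbit_iff.1 hz with ⟨l, rfl⟩
  exact mem_orbit_iff.2 ⟨l ++ m, (word_append f l m x)⟩

lemma continuous_word (f : I → X → X) (hcont : ∀ i, Continuous (f i)) (l : List I) :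
    Continuous (fun x => word f l x) := by
  induction l with
  | nil => exact continuous_id
  | cons i l ih => exact (hcont i).comp ih

/-! ### grey levels of words -/

noncomputable def grey (ρ : I → ℝ → ℝ) : List I → ℝ
  | [] => 1
  | i :: l => ρ i (grey ρ l)

variable {ρ : I → ℝ → ℝ}

lemma grey_mem (hρ : Admissible ρ) (l : List I) : grey ρ l ∈ Icc (0:ℝ) 1 := by
  induction l with
  | nil => exact ⟨zero_le_one, le_refl 1⟩
  | cons i l ih => exact hρ.2.2.2.1 i _ ih

lemma grey_append_le (hρ : Admissible ρ) (l₁ l₂ : List I) :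
    grey ρ (l₁ ++ l₂) ≤ grey ρ l₁ := by
  induction l₁ with
  | nil => exact (grey_mem hρ l₂).2
  | cons i l ih => exact hρ.2.1 i (grey_mem hρ _) (grey_mem hρ _) ih

lemma grey_append_of_one (l₁ : List I) {l₂ : List I} (h2 : grey ρ l₂ = 1) :
    grey ρ (l₁ ++ l₂) = grey ρ l₁ := by
  induction l₁ with
  | nil => simpa [grey]
  | cons i l ih => simp [grey, ih]

lemma grey_replicate {j : I} (hj : ρ j 1 = 1) (p : ℕ) :
    grey ρ (List.replicate p j) = 1 := by
  induction p with
  | zero => rfl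
  | succ p ih => simp [List.replicate_succ, grey, ih, hj]

/-- the candidate value set for `Z^n δ_x` at `y` -/
noncomputable def ZS (f : I → X → X) (ρ : I → ℝ → ℝ) (n : ℕ) (x y : X) : Set ℝ :=
  insert 0 (grey ρ '' {l : List I | l.length = n ∧ word f l x = y})

variable {f : I → X → X}

lemma ZS_finite (n : ℕ) (x y : X) : (ZS f ρ n x y).Finite :=
  (Set.Finite.image _ ((List.finite_length_eq I n).subset (fun l hl => hl.1))).insert 0

lemma ZS_nonempty (n : ℕ) (x y : X) : (ZS f ρ n x y).Nonempty := ⟨0, Set.mem_insert _ _⟩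

lemma ZS_subset (hρ : Admissible ρ) (n : ℕ) (x y : X) : ZS f ρ n x y ⊆ Icc (0:ℝ) 1 := by
  rintro r (rfl | ⟨l, -, rfl⟩)
  · exact ⟨le_refl 0, zero_le_one⟩
  · exact grey_mem hρ l

lemma ZS_bdd (hρ : Admissible ρ) (n : ℕ) (x y : X) : BddAbove (ZS f ρ n x y) :=
  (ZS_finite n x y).bddAbove

lemma sSup_ZS_mem (hρ : Admissible ρ) (n : ℕ) (x y : X) :
    sSup (ZS f ρ n x y) ∈ ZS f ρ n x y :=
  (ZS_nonempty n x y).csSup_mem (ZS_finite n x y)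

lemma sSup_ZS_mem_Icc (hρ : Admissible ρ) (n : ℕ) (x y : X) :
    sSup (ZS f ρ n x y) ∈ Icc (0:ℝ) 1 :=
  ZS_subset hρ n x y (sSup_ZS_mem hρ n x y)

theorem Zn_apply (hρ : Admissible ρ) (n : ℕ) (x : X) (y : X) :
    (Zop f ρ)^[n] (fdelta x) y = sSup (ZS f ρ n x y) := by
  induction n generalizing y with
  | zero =>
    simp only [Function.iterate_zero, id_eq]
    by_cases h : y = x
    · subst h
      have hset : {l : List I | l.length = 0 ∧ word f l y = y} = {[]} := by
        ext l
        constructor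
        · rintro ⟨hl, -⟩; exact List.length_eq_zero_iff.1 hl
        · rintro rfl; exact ⟨rfl, rfl⟩
      rw [ZS, hset]
      simp only [Set.image_singleton]
      rw [show grey ρ ([] : List I) = 1 from rfl]
      rw [csSup_insert (Set.finite_singleton _).bddAbove (Set.singleton_nonempty _)]
      simp [fdelta]
    · have hset : {l : List I | l.length = 0 ∧ word f l x = y} = ∅ := by
        ext l
        simp only [Set.mem_setOf_eq, Set.mem_empty_iff_false, iff_false, not_and]
        intro hl
        rw [List.length_eq_zero_iff.1 hl]
        exact fun hxy => h hxy.symm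
      rw [ZS, hset]
      simp [fdelta, h]
  | succ n ih =>
    rw [Function.iterate_succ_apply']
    set g := (Zop f ρ)^[n] (fdelta x) with hg
    have hgmem : ∀ z, g z ∈ Icc (0:ℝ) 1 := by
      intro z; rw [ih z]; exact sSup_ZS_mem_Icc hρ n x z
    have hfi : ∀ i : I, fuzzyImage (f i) g y
        = sSup (insert 0 (grey ρ '' {l : List I | l.length = n ∧ f i (word f l x) = y})) := by
      intro i
      set A := insert 0 (grey ρ '' {l : List I | l.length = n ∧ f i (word f l x) = y}) with hA
      have hAfin : A.Finite :=
        (Set.Finite.image _ ((List.finite_length_eq I n).subset (fun l hl => hl.1))).insert 0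
      have hAbdd : BddAbove A := hAfin.bddAbove
      have hAne : A.Nonempty := ⟨0, Set.mem_insert _ _⟩
      have hbddim : BddAbove (g '' (f i ⁻¹' {y})) := by
        refine ⟨1, ?_⟩; rintro r ⟨z, -, rfl⟩; exact (hgmem z).2
      apply le_antisymm
      · rcases Set.eq_empty_or_nonempty (g '' (f i ⁻¹' {y})) with he | hne
        · rw [fuzzyImage, he, Real.sSup_empty]
          exact le_csSup hAbdd (Set.mem_insert _ _)
        · refine csSup_le hne ?_
          rintro r ⟨z, hz, rfl⟩
          rw [ih z]
          refine csSup_le_csSup hAbdd (ZS_nonempty n x z) ?_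
          rintro r (rfl | ⟨l, ⟨hlen, hword⟩, rfl⟩)
          · exact Set.mem_insert _ _
          · exact Set.mem_insert_of_mem _ ⟨l, ⟨hlen, by rw [hword]; exact hz⟩, rfl⟩
      · refine csSup_le hAne ?_
        rintro r (rfl | ⟨l, ⟨hlen, hword⟩, rfl⟩)
        · rcases Set.eq_empty_or_nonempty (g '' (f i ⁻¹' {y})) with he | hne
          · rw [fuzzyImage, he, Real.sSup_empty]
          · rcases hne with ⟨r, z, hz, rfl⟩
            exact le_trans (hgmem z).1 (le_csSup hbddim ⟨z, hz, rfl⟩)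
        · calc grey ρ l ≤ g (word f l x) := by
                rw [ih]
                exact le_csSup (ZS_bdd hρ n x _) (Set.mem_insert_of_mem _ ⟨l, ⟨hlen, rfl⟩, rfl⟩)
          _ ≤ sSup (g '' (f i ⁻¹' {y})) := le_csSup hbddim ⟨word f l x, hword, rfl⟩
    have hbddI : BddAbove (Set.range fun i : I => ρ i (fuzzyImage (f i) g y)) :=
      (Set.finite_range _).bddAbove
    have hmemA : ∀ i : I,
        sSup (insert 0 (grey ρ '' {l : List I | l.length = n ∧ f i (word f l x) = y}))
          ∈ insert 0 (grey ρ '' {l : List I | l.length = n ∧ f i (word f l x) = y}) := by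
      intro i
      exact Set.Nonempty.csSup_mem ⟨0, Set.mem_insert _ _⟩
        ((Set.Finite.image _ ((List.finite_length_eq I n).subset (fun l hl => hl.1))).insert 0)
    have hmemIcc : ∀ i : I,
        sSup (insert 0 (grey ρ '' {l : List I | l.length = n ∧ f i (word f l x) = y}))
          ∈ Icc (0:ℝ) 1 := by
      intro i
      rcases hmemA i with h | ⟨l, -, h⟩
      · rw [h]; exact ⟨le_refl 0, zero_le_one⟩
      · rw [← h]; exact grey_mem hρ l
    apply le_antisymm
    · refine ciSup_le fun i => ?_
      rw [hfi i]
      rcases hmemA i with h | ⟨l, ⟨hlen, hword⟩, h⟩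
      · rw [h, hρ.1 i]
        exact le_csSup (ZS_bdd hρ (n+1) x y) (Set.mem_insert _ _)
      · rw [← h]
        refine le_csSup (ZS_bdd hρ (n+1) x y) (Set.mem_insert_of_mem _ ⟨i :: l, ⟨?_, ?_⟩, rfl⟩)
        · simp [hlen]
        · rw [word_cons, hword]
    · refine csSup_le (ZS_nonempty (n+1) x y) ?_
      rintro r (rfl | ⟨l, ⟨hlen, hword⟩, rfl⟩)
      · refine Real.iSup_nonneg fun i => ?_
        rw [hfi i]
        exact (hρ.2.2.2.1 i _ (hmemIcc i)).1
      · rcases l with _ | ⟨i, l'⟩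
        · simp at hlen
        · have hlen' : l'.length = n := by simpa using hlen
          have hword' : f i (word f l' x) = y := hword
          have h1 : grey ρ l' ≤ sSup (insert 0
              (grey ρ '' {l : List I | l.length = n ∧ f i (word f l x) = y})) := by
            refine le_csSup ((Set.Finite.image _ ((List.finite_length_eq I n).subset
              (fun l hl => hl.1))).insert 0).bddAbove
              (Set.mem_insert_of_mem _ ⟨l', ⟨hlen', hword'⟩, rfl⟩)
          calc grey ρ (i :: l') = ρ i (grey ρ l') := rfl
            _ ≤ ρ i (fuzzyImage (f i) g y) := by
                rw [hfi i]
                exact hρ.2.1 i (grey_mem hρ l') (hmemIcc i) h1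
            _ ≤ ⨆ i, ρ i (fuzzyImage (f i) g y) := le_ciSup hbddI i

/-! ### distances along orbits -/

noncomputable def DD (f : I → X → X) (x : X) : ℝ := ⨆ i, dist (f i x) x

lemma DD_nonneg (f : I → X → X) (x : X) : 0 ≤ DD f x :=
  Real.iSup_nonneg fun _ => dist_nonneg

lemma dist_apply_le_DD (f : I → X → X) (i : I) (x : X) : dist (f i x) x ≤ DD f x :=
  le_ciSup (f := fun i => dist (f i x) x) (Set.finite_range _).bddAbove i

variable {C : ℝ}

lemma dist_word_self (horb : OrbitalContr f C) (hC0 : 0 ≤ C) (hC1 : C < 1)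
    (l : List I) (x : X) : dist (word f l x) x ≤ DD f x / (1 - C) := by
  have h1C : (0:ℝ) < 1 - C := by linarith
  induction l with
  | nil =>
    simpa [word] using div_nonneg (DD_nonneg f x) h1C.le
  | cons i l ih =>
    have h1 : dist (word f (i :: l) x) x ≤ C * dist (word f l x) x + dist (f i x) x := by
      calc dist (word f (i :: l) x) x
          ≤ dist (f i (word f l x)) (f i x) + dist (f i x) x := dist_triangle _ _ _
        _ ≤ C * dist (word f l x) x + dist (f i x) x := by
            have := horb i x (word f l x) (word_mem_orbit f l x) x (self_mem_orbit f x)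
            linarith
    have h2 : C * dist (word f l x) x ≤ C * (DD f x / (1 - C)) :=
      mul_le_mul_of_nonneg_left ih hC0
    have h3 : C * (DD f x / (1 - C)) + DD f x = DD f x / (1 - C) := by
      field_simp
      ring
    have h4 := dist_apply_le_DD f i x
    linarith

lemma dist_word_word (horb : OrbitalContr f C) (hC0 : 0 ≤ C) {t x y : X}
    (hx : x ∈ orbitIFS f t) (hy : y ∈ orbitIFS f t) (l : List I) :
    dist (word f l x) (word f l y) ≤ C ^ l.length * dist x y := by
  induction l with
  | nil => simp [word]
  | cons i l ih =>
    have hwx : word f l x ∈ orbitIFS f t := orbit_mono hx (word_mem_orbit f l x)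
    have hwy : word f l y ∈ orbitIFS f t := orbit_mono hy (word_mem_orbit f l y)
    calc dist (word f (i :: l) x) (word f (i :: l) y)
        ≤ C * dist (word f l x) (word f l y) := horb i t _ hwx _ hwy
      _ ≤ C * (C ^ l.length * dist x y) := mul_le_mul_of_nonneg_left ih hC0
      _ = C ^ (i :: l).length * dist x y := by rw [List.length_cons]; ring

/-! ### level sets and `dInfty` -/

def Lev (u : X → ℝ) (α : ℝ) : Set X := {y | α ≤ u y}

structure GLev (u : X → ℝ) (S : Set X) : Prop where
  bounded : Bornology.IsBounded S
  ne : ∀ α : ℝ, α ∈ Ioc (0:ℝ) 1 → (Lev u α).Nonempty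
  sub : ∀ α : ℝ, α ∈ Ioc (0:ℝ) 1 → Lev u α ⊆ S

lemma dInfty_eq (u v : X → ℝ) :
    dInfty u v = ⨆ α : Ioc (0:ℝ) 1, hausdorffDist (Lev u α) (Lev v α) := rfl

lemma dInfty_comm (u v : X → ℝ) : dInfty u v = dInfty v u := by
  simp [dInfty, hausdorffDist_comm]

lemma dInfty_nonneg (u v : X → ℝ) : 0 ≤ dInfty u v :=
  Real.iSup_nonneg fun _ => hausdorffDist_nonneg

lemma dInfty_le_of_forall {u v : X → ℝ} {B : ℝ}
    (h : ∀ α : ℝ, α ∈ Ioc (0:ℝ) 1 → hausdorffDist (Lev u α) (Lev v α) ≤ B) (hB : 0 ≤ B) :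
    dInfty u v ≤ B :=
  Real.iSup_le (fun α => h α α.2) hB

lemma GLev.edist_ne_top {u v : X → ℝ} {S T : Set X} (hu : GLev u S) (hv : GLev v T)
    {α : ℝ} (hα : α ∈ Ioc (0:ℝ) 1) :
    EMetric.hausdorffEdist (Lev u α) (Lev v α) ≠ ⊤ :=
  hausdorffEdist_ne_top_of_nonempty_of_bounded (hu.ne α hα) (hv.ne α hα)
    (hu.bounded.subset (hu.sub α hα)) (hv.bounded.subset (hv.sub α hα))

lemma GLev.hd_bdd {u v : X → ℝ} {S T : Set X} (hu : GLev u S) (hv : GLev v T) :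
    BddAbove (Set.range fun α : Ioc (0:ℝ) 1 => hausdorffDist (Lev u α) (Lev v α)) := by
  refine ⟨diam (S ∪ T), ?_⟩
  rintro r ⟨α, rfl⟩
  calc hausdorffDist (Lev u ↑α) (Lev v ↑α)
      ≤ diam (Lev u ↑α ∪ Lev v ↑α) :=
        hausdorffDist_le_diam (hu.ne α α.2) (hu.bounded.subset (hu.sub α α.2))
          (hv.ne α α.2) (hv.bounded.subset (hv.sub α α.2))
    _ ≤ diam (S ∪ T) :=
        diam_mono (Set.union_subset_union (hu.sub α α.2) (hv.sub α α.2))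
          (hu.bounded.union hv.bounded)

lemma GLev.hd_le_dInfty {u v : X → ℝ} {S T : Set X} (hu : GLev u S) (hv : GLev v T)
    {α : ℝ} (hα : α ∈ Ioc (0:ℝ) 1) :
    hausdorffDist (Lev u α) (Lev v α) ≤ dInfty u v := by
  rw [dInfty_eq]
  exact le_ciSup (GLev.hd_bdd hu hv) (⟨α, hα⟩ : Ioc (0:ℝ) 1)

lemma dInfty_triangle {u v w : X → ℝ} {S T R : Set X}
    (hu : GLev u S) (hv : GLev v T) (hw : GLev w R) :
    dInfty u w ≤ dInfty u v + dInfty v w := by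
  refine dInfty_le_of_forall (fun α hα => ?_)
    (add_nonneg (dInfty_nonneg u v) (dInfty_nonneg v w))
  calc hausdorffDist (Lev u α) (Lev w α)
      ≤ hausdorffDist (Lev u α) (Lev v α) + hausdorffDist (Lev v α) (Lev w α) :=
        hausdorffDist_triangle (GLev.edist_ne_top hu hv hα)
    _ ≤ dInfty u v + dInfty v w :=
        add_le_add (GLev.hd_le_dInfty hu hv hα) (GLev.hd_le_dInfty hv hw hα)

/-! ### level sets of the iterates -/

lemma Zn_level (hρ : Admissible ρ) {α : ℝ} (hα : α ∈ Ioc (0:ℝ) 1) (n : ℕ) (x : X) :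
    Lev ((Zop f ρ)^[n] (fdelta x)) α
      = (fun l => word f l x) '' {l : List I | l.length = n ∧ α ≤ grey ρ l} := by
  ext y
  constructor
  · intro hy
    have h : α ≤ sSup (ZS f ρ n x y) := by
      rw [← Zn_apply hρ]; exact hy
    rcases sSup_ZS_mem hρ n x y with h0 | ⟨l, ⟨hlen, hword⟩, hgl⟩
    · exact absurd (lt_of_lt_of_le hα.1 (h.trans (le_of_eq h0))) (lt_irrefl 0)
    · exact ⟨l, ⟨hlen, by rw [hgl]; exact h⟩, hword⟩
  · rintro ⟨l, ⟨hlen, hgl⟩, rfl⟩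
    show α ≤ (Zop f ρ)^[n] (fdelta x) (word f l x)
    rw [Zn_apply hρ]
    exact le_trans hgl (le_csSup (ZS_bdd hρ n x _) (Set.mem_insert_of_mem _ ⟨l, ⟨hlen, rfl⟩, rfl⟩))

lemma Lev_Zn_subset_orbit (hρ : Admissible ρ) {α : ℝ} (hα : α ∈ Ioc (0:ℝ) 1) (n : ℕ) (x : X) :
    Lev ((Zop f ρ)^[n] (fdelta x)) α ⊆ orbitIFS f x := by
  rw [Zn_level hρ hα]
  rintro y ⟨l, -, rfl⟩
  exact word_mem_orbit f l x

lemma GLev_Zn (hρ : Admissible ρ) {j : I} (hj : ρ j 1 = 1) (horb : OrbitalContr f C)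
    (hC0 : 0 ≤ C) (hC1 : C < 1) (n : ℕ) (x : X) :
    GLev ((Zop f ρ)^[n] (fdelta x)) (closedBall x (DD f x / (1 - C))) := by
  refine ⟨isBounded_closedBall, fun α hα => ?_, fun α hα => ?_⟩
  · refine ⟨word f (List.replicate n j) x, ?_⟩
    rw [Zn_level hρ hα]
    exact ⟨List.replicate n j, ⟨List.length_replicate, by
      rw [grey_replicate hj]; exact hα.2⟩, rfl⟩
  · rw [Zn_level hρ hα]
    rintro y ⟨l, ⟨hlen, -⟩, rfl⟩
    exact mem_closedBall.2 (dist_word_self horb hC0 hC1 l x)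

lemma GLev_star {u' : X → ℝ} (hnorm : ∃ z, u' z = 1) (hcpt : IsCompact (fsupp u')) :
    GLev u' (fsupp u') := by
  obtain ⟨z, hz⟩ := hnorm
  refine ⟨hcpt.isBounded, fun α hα => ⟨z, ?_⟩, fun α hα y hy => subset_closure ?_⟩
  · show α ≤ u' z
    rw [hz]; exact hα.2
  · exact lt_of_lt_of_le hα.1 hy

/-! ### Cauchy-type estimates -/

lemma dInfty_Zn_add (hρ : Admissible ρ) {j : I} (hj : ρ j 1 = 1) (horb : OrbitalContr f C)
    (hC0 : 0 ≤ C) (hC1 : C < 1) (n p : ℕ) (x : X) :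
    dInfty ((Zop f ρ)^[n] (fdelta x)) ((Zop f ρ)^[n + p] (fdelta x))
      ≤ C ^ n * (DD f x / (1 - C)) := by
  have h1C : (0:ℝ) < 1 - C := by linarith
  have hr : 0 ≤ C ^ n * (DD f x / (1 - C)) :=
    mul_nonneg (pow_nonneg hC0 n) (div_nonneg (DD_nonneg f x) h1C.le)
  refine dInfty_le_of_forall (fun α hα => ?_) hr
  rw [Zn_level hρ hα, Zn_level hρ hα]
  refine hausdorffDist_le_of_mem_dist hr ?_ ?_
  · rintro a ⟨l, ⟨hlen, hgl⟩, rfl⟩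
    refine ⟨word f (l ++ List.replicate p j) x, ⟨l ++ List.replicate p j, ⟨?_, ?_⟩, rfl⟩, ?_⟩
    · simp [hlen]
    · rw [grey_append_of_one l (grey_replicate hj p)]; exact hgl
    · rw [word_append]
      calc dist (word f l x) (word f l (word f (List.replicate p j) x))
          ≤ C ^ l.length * dist x (word f (List.replicate p j) x) :=
            dist_word_word horb hC0 (self_mem_orbit f x)
              (word_mem_orbit f (List.replicate p j) x) l
        _ ≤ C ^ n * (DD f x / (1 - C)) := by
            rw [hlen, dist_comm]
            exact mul_le_mul_of_nonneg_left (dist_word_self horb hC0 hC1 _ x)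
              (pow_nonneg hC0 n)
  · rintro b ⟨l, ⟨hlen, hgl⟩, rfl⟩
    have htake : (l.take n).length = n := by
      rw [List.length_take, hlen]; omega
    refine ⟨word f (l.take n) x, ⟨l.take n, ⟨htake, ?_⟩, rfl⟩, ?_⟩
    · have h := grey_append_le hρ (l.take n) (l.drop n)
      rw [List.take_append_drop] at h
      exact le_trans hgl h
    · show dist (word f l x) (word f (l.take n) x) ≤ C ^ n * (DD f x / (1 - C))
      have hsplit : word f l x = word f (l.take n) (word f (l.drop n) x) := by
        rw [← word_append, List.take_append_drop]
      rw [hsplit]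
      calc dist (word f (l.take n) (word f (l.drop n) x)) (word f (l.take n) x)
          ≤ C ^ (l.take n).length * dist (word f (l.drop n) x) x :=
            dist_word_word horb hC0 (word_mem_orbit f (l.drop n) x)
              (self_mem_orbit f x) (l.take n)
        _ ≤ C ^ n * (DD f x / (1 - C)) := by
            rw [htake]
            exact mul_le_mul_of_nonneg_left (dist_word_self horb hC0 hC1 _ x)
              (pow_nonneg hC0 n)

lemma dInfty_Zn_orbit (hρ : Admissible ρ) (horb : OrbitalContr f C) (hC0 : 0 ≤ C)
    {t x y : X} (hx : x ∈ orbitIFS f t) (hy : y ∈ orbitIFS f t) (n : ℕ) :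
    dInfty ((Zop f ρ)^[n] (fdelta x)) ((Zop f ρ)^[n] (fdelta y)) ≤ C ^ n * dist x y := by
  have hr : 0 ≤ C ^ n * dist x y := mul_nonneg (pow_nonneg hC0 n) dist_nonneg
  refine dInfty_le_of_forall (fun α hα => ?_) hr
  rw [Zn_level hρ hα, Zn_level hρ hα]
  refine hausdorffDist_le_of_mem_dist hr ?_ ?_
  · rintro a ⟨l, hl, rfl⟩
    exact ⟨word f l y, ⟨l, hl, rfl⟩, by
      rw [← hl.1]; exact dist_word_word horb hC0 hx hy l⟩
  · rintro b ⟨l, hl, rfl⟩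
    exact ⟨word f l x, ⟨l, hl, rfl⟩, by
      rw [dist_comm, ← hl.1]; exact dist_word_word horb hC0 hx hy l⟩

lemma dInfty_Zn_pair (hρ : Admissible ρ) (n : ℕ) (x x' : X) {b : ℝ} (hb : 0 ≤ b)
    (hB : ∀ l : List I, l.length = n → dist (word f l x) (word f l x') ≤ b) :
    dInfty ((Zop f ρ)^[n] (fdelta x)) ((Zop f ρ)^[n] (fdelta x')) ≤ b := by
  refine dInfty_le_of_forall (fun α hα => ?_) hb
  rw [Zn_level hρ hα, Zn_level hρ hα]
  refine hausdorffDist_le_of_mem_dist hb ?_ ?_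
  · rintro a ⟨l, hl, rfl⟩
    exact ⟨word f l x', ⟨l, hl, rfl⟩, hB l hl.1⟩
  · rintro a ⟨l, hl, rfl⟩
    exact ⟨word f l x, ⟨l, hl, rfl⟩, by rw [dist_comm]; exact hB l hl.1⟩

/-! ### functions determined by their level sets -/

lemma le_of_levels {a b : X → ℝ} (ha : ∀ z, a z ∈ Icc (0:ℝ) 1) (hb0 : ∀ z, 0 ≤ b z)
    (h : ∀ α : ℝ, α ∈ Ioc (0:ℝ) 1 → Lev a α ⊆ Lev b α) : ∀ z, a z ≤ b z := by
  intro z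
  rcases le_or_gt (a z) 0 with h0 | h0
  · exact le_trans h0 (hb0 z)
  · exact h (a z) ⟨h0, (ha z).2⟩ (le_refl (a z))

lemma eq_of_dInfty_zero {a b : X → ℝ} {S T : Set X} (hga : GLev a S) (hgb : GLev b T)
    (hA : ∀ z, a z ∈ Icc (0:ℝ) 1) (hB : ∀ z, b z ∈ Icc (0:ℝ) 1)
    (hca : UpperSemicontinuous a) (hcb : UpperSemicontinuous b)
    (h0 : dInfty a b ≤ 0) : a = b := by
  have hlev : ∀ α : ℝ, α ∈ Ioc (0:ℝ) 1 → Lev a α ⊆ Lev b α ∧ Lev b α ⊆ Lev a α := by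
    intro α hα
    have hd : hausdorffDist (Lev a α) (Lev b α) ≤ 0 :=
      le_trans (GLev.hd_le_dInfty hga hgb hα) h0
    have hfin := GLev.edist_ne_top hga hgb hα
    constructor
    · intro z hz
      have h1 : infDist z (Lev b α) = 0 :=
        le_antisymm (le_trans (infDist_le_hausdorffDist_of_mem hz hfin) hd) infDist_nonneg
      have hcl : IsClosed (Lev b α) := hcb.isClosed_preimage α
      rw [← hcl.closure_eq]
      exact (mem_closure_iff_infDist_zero (hgb.ne α hα)).2 h1
    · intro z hz
      rw [hausdorffDist_comm] at hd
      have hfin := GLev.edist_ne_top hgb hga hα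
      have h1 : infDist z (Lev a α) = 0 :=
        le_antisymm (le_trans (infDist_le_hausdorffDist_of_mem hz hfin) hd) infDist_nonneg
      have hcl : IsClosed (Lev a α) := hca.isClosed_preimage α
      rw [← hcl.closure_eq]
      exact (mem_closure_iff_infDist_zero (hga.ne α hα)).2 h1
  funext z
  exact le_antisymm
    (le_of_levels hA (fun z => (hB z).1) (fun α hα => (hlev α hα).1) z)
    (le_of_levels hB (fun z => (hA z).1) (fun α hα => (hlev α hα).2) z)

lemma eventually_le_of_tendsto_zero {g : ℕ → ℝ} (h : Tendsto g atTop (nhds 0)) {ε : ℝ}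
    (hε : 0 < ε) : ∀ᶠ k in atTop, g k ≤ ε :=
  h.eventually (eventually_le_nhds hε)

end Stmt12Aux


open Stmt12Aux in
/-- Proposition 3.7: `w_u = ∨_{x ∈ [u]^*} u_x` is upper semicontinuous,
normal and compactly supported, i.e. `w_u ∈ F*_X`. -/
theorem stmt12 {X I : Type*} [MetricSpace X] [CompleteSpace X] [DecidableEq X]
    [Finite I] [Nonempty I]
    (f : I → X → X) (hcont : ∀ i, Continuous (f i))
    (C : ℝ) (hC0 : 0 ≤ C) (hC1 : C < 1) (horb : OrbitalContr f C)
    (ρ : I → ℝ → ℝ) (hρ : Admissible ρ)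
    (u : X → ℝ) (hu : InFS f u)
    (U : X → X → ℝ) (hUStar : ∀ x, 0 < u x → InFS f (U x))
    (hU : ∀ x, 0 < u x →
      Tendsto (fun n => dInfty ((Zop f ρ)^[n] (fdelta x)) (U x)) atTop (nhds 0)) :
    UpperSemicontinuous (fun y => ⨆ x : {x // 0 < u x}, U x.1 y) ∧
    IsFuzzyStar (fun y => ⨆ x : {x // 0 < u x}, U x.1 y) := by
  classical
  obtain ⟨⟨⟨hurange, hunorm, husupp⟩, huusc⟩, huorb⟩ := hu
  obtain ⟨x₁, hx₁⟩ := hunorm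
  obtain ⟨j, hj⟩ := hρ.2.2.2.2
  have h1C : (0:ℝ) < 1 - C := by linarith
  have hx₁pos : 0 < u x₁ := by rw [hx₁]; exact one_pos
  haveI hne : Nonempty {x // 0 < u x} := ⟨⟨x₁, hx₁pos⟩⟩
  set w : X → ℝ := fun y => ⨆ x : {x // 0 < u x}, U x.1 y with hwdef
  have hUrange : ∀ x, 0 < u x → ∀ z, U x z ∈ Icc (0:ℝ) 1 := fun x hx => (hUStar x hx).1.1.1
  have hUnorm : ∀ x, 0 < u x → ∃ z, U x z = 1 := fun x hx => (hUStar x hx).1.1.2.1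
  have hUcpt : ∀ x, 0 < u x → IsCompact (fsupp (U x)) := fun x hx => (hUStar x hx).1.1.2.2
  have hUusc : ∀ x, 0 < u x → UpperSemicontinuous (U x) := fun x hx => (hUStar x hx).1.2
  have hbdd : ∀ y, BddAbove (Set.range fun x : {x // 0 < u x} => U x.1 y) := fun y =>
    ⟨1, by rintro r ⟨x, rfl⟩; exact (hUrange x.1 x.2 y).2⟩
  have hw0 : ∀ y, 0 ≤ w y := fun y => Real.iSup_nonneg fun x => (hUrange x.1 x.2 y).1
  have hw1 : ∀ y, w y ≤ 1 := fun y => ciSup_le fun x => (hUrange x.1 x.2 y).2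
  have hGZ : ∀ (n : ℕ) (x : X),
      GLev ((Zop f ρ)^[n] (fdelta x)) (closedBall x (DD f x / (1 - C))) :=
    fun n x => GLev_Zn hρ hj horb hC0 hC1 n x
  have hGU : ∀ x, 0 < u x → GLev (U x) (fsupp (U x)) :=
    fun x hx => GLev_star (hUnorm x hx) (hUcpt x hx)
  -- key quantitative estimate
  have hKey : ∀ x, 0 < u x → ∀ n : ℕ,
      dInfty ((Zop f ρ)^[n] (fdelta x)) (U x) ≤ C ^ n * (DD f x / (1 - C)) := by
    intro x hx n
    have hshift : Tendsto (fun p : ℕ => dInfty ((Zop f ρ)^[n + p] (fdelta x)) (U x))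
        atTop (nhds 0) := by
      have h1 : (fun p : ℕ => dInfty ((Zop f ρ)^[n + p] (fdelta x)) (U x))
          = (fun m : ℕ => dInfty ((Zop f ρ)^[m] (fdelta x)) (U x)) ∘ (fun p => p + n) := by
        funext p; simp [Nat.add_comm]
      rw [h1]
      exact (hU x hx).comp (tendsto_add_atTop_nat n)
    have hlim : Tendsto (fun p : ℕ => C ^ n * (DD f x / (1 - C))
        + dInfty ((Zop f ρ)^[n + p] (fdelta x)) (U x)) atTop
        (nhds (C ^ n * (DD f x / (1 - C)))) := by
      have h2 := Tendsto.add
        (tendsto_const_nhds : Tendsto (fun _ : ℕ => C ^ n * (DD f x / (1 - C))) atTop _)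
        hshift
      simpa using h2
    refine ge_of_tendsto hlim (Eventually.of_forall fun p => ?_)
    calc dInfty ((Zop f ρ)^[n] (fdelta x)) (U x)
        ≤ dInfty ((Zop f ρ)^[n] (fdelta x)) ((Zop f ρ)^[n + p] (fdelta x))
          + dInfty ((Zop f ρ)^[n + p] (fdelta x)) (U x) :=
          dInfty_triangle (hGZ n x) (hGZ (n + p) x) (hGU x hx)
      _ ≤ C ^ n * (DD f x / (1 - C))
          + dInfty ((Zop f ρ)^[n + p] (fdelta x)) (U x) := by
          have := dInfty_Zn_add hρ hj horb hC0 hC1 n p x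
          linarith
  -- coherence
  have hcoh : ∀ x, 0 < u x → ∃ y, u y = 1 ∧ U x = U y := by
    intro x hx
    obtain ⟨t, y₀, hxt, hy₀t, hy₀⟩ := huorb x hx
    have hy₀pos : 0 < u y₀ := by rw [hy₀]; exact one_pos
    refine ⟨y₀, hy₀, ?_⟩
    have hd0 : dInfty (U x) (U y₀) ≤ 0 := by
      have hp := tendsto_pow_atTop_nhds_zero_of_lt_one hC0 hC1
      have htend : Tendsto (fun n : ℕ => C ^ n * (DD f x / (1 - C))
          + (C ^ n * dist x y₀ + C ^ n * (DD f y₀ / (1 - C)))) atTop (nhds 0) := by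
        have h2 := ((hp.mul_const (DD f x / (1 - C))).add
          ((hp.mul_const (dist x y₀)).add (hp.mul_const (DD f y₀ / (1 - C)))))
        simpa using h2
      refine ge_of_tendsto htend (Eventually.of_forall fun n => ?_)
      calc dInfty (U x) (U y₀)
          ≤ dInfty (U x) ((Zop f ρ)^[n] (fdelta x))
            + dInfty ((Zop f ρ)^[n] (fdelta x)) (U y₀) :=
            dInfty_triangle (hGU x hx) (hGZ n x) (hGU y₀ hy₀pos)
        _ ≤ dInfty (U x) ((Zop f ρ)^[n] (fdelta x))
            + (dInfty ((Zop f ρ)^[n] (fdelta x)) ((Zop f ρ)^[n] (fdelta y₀))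
              + dInfty ((Zop f ρ)^[n] (fdelta y₀)) (U y₀)) := by
            have h3 := dInfty_triangle (hGZ n x) (hGZ n y₀) (hGU y₀ hy₀pos)
            linarith
        _ ≤ C ^ n * (DD f x / (1 - C))
            + (C ^ n * dist x y₀ + C ^ n * (DD f y₀ / (1 - C))) := by
            have h1 : dInfty (U x) ((Zop f ρ)^[n] (fdelta x))
                ≤ C ^ n * (DD f x / (1 - C)) := by
              rw [dInfty_comm]; exact hKey x hx n
            have h2 := dInfty_Zn_orbit hρ horb hC0 hxt hy₀t n
            have h3 := hKey y₀ hy₀pos n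
            linarith
    exact eq_of_dInfty_zero (hGU x hx) (hGU y₀ hy₀pos) (hUrange x hx) (hUrange y₀ hy₀pos)
      (hUusc x hx) (hUusc y₀ hy₀pos) hd0
  -- the set of points of membership one
  set K₁ : Set X := {x | u x = 1} with hK₁def
  have hK₁mem : ∀ {x}, u x = 1 → x ∈ K₁ := fun h => h
  have hK₁pos : ∀ x ∈ K₁, 0 < u x := fun x hx => by
    have hx1 : u x = 1 := hx
    rw [hx1]; exact one_pos
  have hK₁closed : IsClosed K₁ := by
    have hEq : K₁ = u ⁻¹' Ici 1 := by
      ext z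
      constructor
      · intro h; exact le_of_eq (id (Eq.symm h))
      · intro h; exact le_antisymm (hurange z).2 h
    rw [hEq]
    exact huusc.isClosed_preimage 1
  have hK₁cpt : IsCompact K₁ :=
    husupp.of_isClosed_subset hK₁closed (fun x hx => subset_closure (hK₁pos x hx))
  have hx₁K : x₁ ∈ K₁ := hx₁
  -- a uniform bound for DD on K₁
  have hMBex : ∀ i : I, ∃ b : ℝ, ∀ x ∈ K₁, dist (f i x) x ≤ b := by
    intro i
    rcases hK₁cpt.exists_bound_of_continuousOn
      (((hcont i).dist continuous_id).continuousOn) with ⟨b, hb⟩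
    exact ⟨b, fun x hx => le_trans (le_abs_self _) (by simpa using hb x hx)⟩
  choose bI hbI using hMBex
  haveI : Fintype I := Fintype.ofFinite I
  set MB : ℝ := (⨆ i, bI i) / (1 - C) with hMBdef
  have hMBle : ∀ x ∈ K₁, DD f x / (1 - C) ≤ MB := by
    intro x hx
    have h1 : DD f x ≤ ⨆ i, bI i :=
      ciSup_le fun i => le_trans (hbI i x hx)
        (le_ciSup (f := bI) (Set.finite_range _).bddAbove i)
    rw [hMBdef]
    exact (div_le_div_iff_of_pos_right h1C).2 h1
  have hMB0 : 0 ≤ MB := le_trans (div_nonneg (DD_nonneg f x₁) h1C.le) (hMBle x₁ hx₁K)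
  -- compactness of the closure of the union of orbits
  set E : Set X := ⋃ x ∈ K₁, orbitIFS f x with hEdef
  have hEcpt : IsCompact (closure E) := by
    rw [isCompact_iff_totallyBounded_isComplete]
    refine ⟨TotallyBounded.closure ?_, isClosed_closure.isComplete⟩
    rw [Metric.totallyBounded_iff]
    intro ε hε
    obtain ⟨n, hn⟩ : ∃ n : ℕ, C ^ n * MB < ε / 2 := by
      have hev := eventually_le_of_tendsto_zero
        (by simpa using (tendsto_pow_atTop_nhds_zero_of_lt_one hC0 hC1).mul_const MB)
        (show (0:ℝ) < ε / 4 by linarith)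
      rcases hev.exists with ⟨n, hn⟩
      exact ⟨n, lt_of_le_of_lt hn (by linarith)⟩
    set G : Set X := ⋃ l ∈ {l : List I | l.length ≤ n}, word f l '' K₁ with hGdef
    have hGcpt : IsCompact G := (List.finite_length_le I n).isCompact_biUnion
      (fun l _ => hK₁cpt.image (continuous_word f hcont l))
    obtain ⟨t, htfin, htcov⟩ := (Metric.totallyBounded_iff.1 hGcpt.totallyBounded)
      (ε / 2) (by linarith)
    refine ⟨t, htfin, ?_⟩
    intro z hz
    obtain ⟨x, hxK, hzx⟩ : ∃ x ∈ K₁, z ∈ orbitIFS f x := by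
      simpa [hEdef] using hz
    obtain ⟨l, rfl⟩ := mem_orbit_iff.1 hzx
    have hinG : ∀ m : List I, m.length ≤ n → word f m x ∈ G := fun m hm =>
      Set.mem_biUnion hm ⟨x, hxK, rfl⟩
    rcases le_or_gt l.length n with hlen | hlen
    · obtain ⟨y, hyt, hy⟩ : ∃ y ∈ t, word f l x ∈ ball y (ε / 2) := by
        simpa using htcov (hinG l hlen)
      refine Set.mem_biUnion hyt ?_
      exact mem_ball.2 (lt_of_lt_of_le (mem_ball.1 hy) (by linarith))
    · have htake : (l.take n).length = n := by
        rw [List.length_take]; omega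
      have hdist : dist (word f l x) (word f (l.take n) x) ≤ C ^ n * MB := by
        have hsplit : word f l x = word f (l.take n) (word f (l.drop n) x) := by
          rw [← word_append, List.take_append_drop]
        rw [hsplit]
        calc dist (word f (l.take n) (word f (l.drop n) x)) (word f (l.take n) x)
            ≤ C ^ (l.take n).length * dist (word f (l.drop n) x) x :=
              dist_word_word horb hC0 (word_mem_orbit f (l.drop n) x)
                (self_mem_orbit f x) (l.take n)
          _ ≤ C ^ n * MB := by
              rw [htake]
              exact mul_le_mul_of_nonneg_left
                (le_trans (dist_word_self horb hC0 hC1 _ x) (hMBle x hxK))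
                (pow_nonneg hC0 n)
      obtain ⟨y, hyt, hy⟩ : ∃ y ∈ t, word f (l.take n) x ∈ ball y (ε / 2) := by
        simpa using htcov (hinG (l.take n) (le_of_eq htake))
      refine Set.mem_biUnion hyt ?_
      have hby := mem_ball.1 hy
      refine mem_ball.2 ?_
      calc dist (word f l x) y ≤ dist (word f l x) (word f (l.take n) x)
            + dist (word f (l.take n) x) y := dist_triangle _ _ _
        _ < C ^ n * MB + ε / 2 := by linarith
        _ ≤ ε := by linarith
  -- compact support of w
  have hwsupp : IsCompact (fsupp w) := by
    refine hEcpt.of_isClosed_subset isClosed_closure ?_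
    refine closure_minimal ?_ isClosed_closure
    intro y hy
    have hy' : (0:ℝ) < w y := hy
    obtain ⟨x₂, hx₂⟩ := exists_lt_of_lt_ciSup hy'
    obtain ⟨y', hy'1, hUeq⟩ := hcoh x₂.1 x₂.2
    have hy'pos : 0 < u y' := by rw [hy'1]; exact one_pos
    have hval : 0 < U y' y := by rw [← hUeq]; exact hx₂
    have hmemlev : y ∈ Lev (U y') (U y' y) := by show U y' y ≤ U y' y; exact le_refl _
    have hαIoc : U y' y ∈ Ioc (0:ℝ) 1 := ⟨hval, (hUrange y' hy'pos y).2⟩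
    have hone : (orbitIFS f y').Nonempty := ⟨y', self_mem_orbit f y'⟩
    have hsubo : y ∈ closure (orbitIFS f y') := by
      rw [mem_closure_iff_infDist_zero hone]
      have hstep : ∀ n : ℕ, infDist y (orbitIFS f y') ≤ C ^ n * (DD f y' / (1 - C)) := by
        intro n
        have h1 : infDist y (Lev ((Zop f ρ)^[n] (fdelta y')) (U y' y))
            ≤ hausdorffDist (Lev (U y') (U y' y))
              (Lev ((Zop f ρ)^[n] (fdelta y')) (U y' y)) :=
          infDist_le_hausdorffDist_of_mem hmemlev
            (GLev.edist_ne_top (hGU y' hy'pos) (hGZ n y') hαIoc)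
        have h2 : hausdorffDist (Lev (U y') (U y' y))
            (Lev ((Zop f ρ)^[n] (fdelta y')) (U y' y))
            ≤ dInfty (U y') ((Zop f ρ)^[n] (fdelta y')) :=
          GLev.hd_le_dInfty (hGU y' hy'pos) (hGZ n y') hαIoc
        have h4 : dInfty (U y') ((Zop f ρ)^[n] (fdelta y'))
            ≤ C ^ n * (DD f y' / (1 - C)) := by
          rw [dInfty_comm]; exact hKey y' hy'pos n
        have h5 : infDist y (orbitIFS f y')
            ≤ infDist y (Lev ((Zop f ρ)^[n] (fdelta y')) (U y' y)) :=
          infDist_le_infDist_of_subset (Lev_Zn_subset_orbit hρ hαIoc n y')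
            ((hGZ n y').ne _ hαIoc)
        linarith
      have htends : Tendsto (fun n : ℕ => C ^ n * (DD f y' / (1 - C))) atTop (nhds 0) := by
        simpa using (tendsto_pow_atTop_nhds_zero_of_lt_one hC0 hC1).mul_const
          (DD f y' / (1 - C))
      exact le_antisymm (ge_of_tendsto htends (Eventually.of_forall hstep)) infDist_nonneg
    have horbE : orbitIFS f y' ⊆ E := fun p hp => Set.mem_biUnion (hK₁mem hy'1) hp
    exact closure_mono horbE hsubo
  -- normality of w
  obtain ⟨y₁, hy₁⟩ := hUnorm x₁ hx₁pos
  have hwnorm : w y₁ = 1 := by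
    refine le_antisymm (hw1 y₁) ?_
    have h := le_ciSup (hbdd y₁) (⟨x₁, hx₁pos⟩ : {x // 0 < u x})
    rw [hy₁] at h
    exact h
  -- upper semicontinuity of w
  have hwusc : UpperSemicontinuous w := by
    rw [upperSemicontinuous_iff_isClosed_preimage]
    intro c
    rcases le_or_gt c 0 with hc | hc
    · have hEq : w ⁻¹' Ici c = Set.univ :=
        Set.eq_univ_of_forall fun y => le_trans hc (hw0 y)
      rw [hEq]; exact isClosed_univ
    · apply IsSeqClosed.isClosed
      intro ys y hys hlim
      have hcle1 : c ≤ 1 := le_trans (hys 0) (hw1 (ys 0))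
      have hpick : ∀ k : ℕ, ∃ a : X, u a = 1 ∧ c - 1 / (k + 1) < U a (ys k) := by
        intro k
        have hk1 : (0:ℝ) < 1 / ((k:ℝ) + 1) := by positivity
        have hlt : c - 1 / ((k:ℝ) + 1) < w (ys k) := lt_of_lt_of_le (by linarith) (hys k)
        obtain ⟨x₂, hx₂⟩ := exists_lt_of_lt_ciSup hlt
        obtain ⟨a, ha1, hEq⟩ := hcoh x₂.1 x₂.2
        exact ⟨a, ha1, by rw [← hEq]; exact hx₂⟩
      choose a ha1 haval using hpick
      have haK : ∀ k, a k ∈ K₁ := fun k => hK₁mem (ha1 k)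
      obtain ⟨xs, hxsK, φ, hφ, hφlim⟩ := hK₁cpt.tendsto_subseq haK
      have hxspos : 0 < u xs := hK₁pos xs hxsK
      suffices hfin : c ≤ U xs y by
        exact le_trans hfin (le_ciSup (hbdd y) (⟨xs, hxspos⟩ : {x // 0 < u x}))
      -- continuity along the subsequence
      have hcont2 : ∀ ε : ℝ, 0 < ε → ∀ᶠ k in atTop, dInfty (U (a (φ k))) (U xs) ≤ ε := by
        intro ε hε
        obtain ⟨n, hn⟩ : ∃ n : ℕ, C ^ n * (2 * MB) ≤ ε / 2 :=
          (eventually_le_of_tendsto_zero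
            (by simpa using (tendsto_pow_atTop_nhds_zero_of_lt_one hC0 hC1).mul_const (2 * MB))
            (by linarith)).exists
        have hev : ∀ᶠ k in atTop, ∀ l ∈ {l : List I | l.length = n},
            dist (word f l (a (φ k))) (word f l xs) ≤ ε / 4 := by
          rw [eventually_all_finite (List.finite_length_eq I n)]
          intro l hl
          have h1 : Tendsto (fun k => dist (word f l (a (φ k))) (word f l xs))
              atTop (nhds 0) := by
            have h2 := ((continuous_word f hcont l).tendsto xs).comp hφlim
            have h3 := h2.dist
              (tendsto_const_nhds : Tendsto (fun _ : ℕ => word f l xs) atTop _)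
            simpa using h3
          exact eventually_le_of_tendsto_zero h1 (by linarith)
        filter_upwards [hev] with k hk
        have hapos : 0 < u (a (φ k)) := hK₁pos _ (haK (φ k))
        have h1 : dInfty (U (a (φ k))) ((Zop f ρ)^[n] (fdelta (a (φ k))))
            ≤ C ^ n * MB := by
          rw [dInfty_comm]
          exact le_trans (hKey _ hapos n) (mul_le_mul_of_nonneg_left
            (hMBle _ (haK (φ k))) (pow_nonneg hC0 n))
        have h2 : dInfty ((Zop f ρ)^[n] (fdelta (a (φ k))))
            ((Zop f ρ)^[n] (fdelta xs)) ≤ ε / 4 :=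
          dInfty_Zn_pair hρ n _ _ (by linarith) (fun l hl => hk l hl)
        have h3 : dInfty ((Zop f ρ)^[n] (fdelta xs)) (U xs) ≤ C ^ n * MB :=
          le_trans (hKey xs hxspos n) (mul_le_mul_of_nonneg_left
            (hMBle xs hxsK) (pow_nonneg hC0 n))
        have h4 : dInfty (U (a (φ k))) (U xs)
            ≤ dInfty (U (a (φ k))) ((Zop f ρ)^[n] (fdelta (a (φ k))))
              + (dInfty ((Zop f ρ)^[n] (fdelta (a (φ k)))) ((Zop f ρ)^[n] (fdelta xs))
                + dInfty ((Zop f ρ)^[n] (fdelta xs)) (U xs)) := by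
          have t1 := dInfty_triangle (hGU _ hapos) (hGZ n (a (φ k))) (hGU xs hxspos)
          have t2 := dInfty_triangle (hGZ n (a (φ k))) (hGZ n xs) (hGU xs hxspos)
          linarith
        have h5 : C ^ n * MB + (ε / 4 + C ^ n * MB) ≤ ε := by linarith
        linarith
      -- the main estimate
      have hmain : ∀ ε : ℝ, 0 < ε → ε < c → c - ε ≤ U xs y := by
        intro ε hε hεc
        have hβIoc : c - ε ∈ Ioc (0:ℝ) 1 := ⟨by linarith, by linarith⟩
        have hLclosed : IsClosed (Lev (U xs) (c - ε)) :=
          (hUusc xs hxspos).isClosed_preimage (c - ε)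
        have hLne : (Lev (U xs) (c - ε)).Nonempty := (hGU xs hxspos).ne _ hβIoc
        have h0 : infDist y (Lev (U xs) (c - ε)) = 0 := by
          refine le_antisymm ?_ infDist_nonneg
          have hbound : ∀ δ : ℝ, 0 < δ → infDist y (Lev (U xs) (c - ε)) ≤ δ := by
            intro δ hδ
            have hev1 := hcont2 (δ / 2) (by linarith)
            have hev2 : ∀ᶠ k in atTop, dist y (ys (φ k)) ≤ δ / 2 := by
              have h1 : Tendsto (fun k => dist y (ys (φ k))) atTop (nhds 0) := by
                have h2 := (hlim.comp hφ.tendsto_atTop).dist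
                  (tendsto_const_nhds : Tendsto (fun _ : ℕ => y) atTop _)
                simpa [dist_comm] using h2
              exact eventually_le_of_tendsto_zero h1 (by linarith)
            have hev3 : ∀ᶠ k in atTop, (1:ℝ) / (φ k + 1) ≤ ε := by
              have h1 : Tendsto (fun k => (1:ℝ) / ((φ k : ℝ) + 1)) atTop (nhds 0) := by
                have h2 := (tendsto_one_div_add_atTop_nhds_zero_nat (𝕜 := ℝ)).comp hφ.tendsto_atTop
                exact h2
              exact eventually_le_of_tendsto_zero h1 hε
            obtain ⟨k, hk1, hk2, hk3⟩ := (hev1.and (hev2.and hev3)).exists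
            have hapos : 0 < u (a (φ k)) := hK₁pos _ (haK (φ k))
            have hmem : ys (φ k) ∈ Lev (U (a (φ k))) (c - ε) := by
              show c - ε ≤ U (a (φ k)) (ys (φ k))
              have hav := haval (φ k)
              linarith
            have hfin' := GLev.edist_ne_top (hGU _ hapos) (hGU xs hxspos) hβIoc
            calc infDist y (Lev (U xs) (c - ε))
                ≤ infDist (ys (φ k)) (Lev (U xs) (c - ε)) + dist y (ys (φ k)) :=
                  infDist_le_infDist_add_dist
              _ ≤ (infDist (ys (φ k)) (Lev (U (a (φ k))) (c - ε))
                  + hausdorffDist (Lev (U (a (φ k))) (c - ε)) (Lev (U xs) (c - ε)))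
                  + dist y (ys (φ k)) := by
                  have h6 := infDist_le_infDist_add_hausdorffDist
                    (x := ys (φ k)) (s := Lev (U (a (φ k))) (c - ε))
                    (t := Lev (U xs) (c - ε)) hfin'
                  linarith
              _ ≤ (0 + dInfty (U (a (φ k))) (U xs)) + dist y (ys (φ k)) := by
                  have hz : infDist (ys (φ k)) (Lev (U (a (φ k))) (c - ε)) = 0 :=
                    infDist_zero_of_mem hmem
                  have hh := GLev.hd_le_dInfty (hGU _ hapos) (hGU xs hxspos) hβIoc
                  linarith
              _ ≤ δ := by linarith
          by_contra hcon
          push_neg at hcon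
          have h7 := hbound (infDist y (Lev (U xs) (c - ε)) / 2) (by linarith)
          linarith
        have hmem : y ∈ Lev (U xs) (c - ε) := by
          rw [← hLclosed.closure_eq]
          exact (mem_closure_iff_infDist_zero hLne).2 h0
        exact hmem
      by_contra hlt
      push_neg at hlt
      have hU0 : 0 ≤ U xs y := (hUrange xs hxspos y).1
      have h8 := hmain ((c - U xs y) / 2) (by linarith) (by linarith)
      linarith
  exact ⟨hwusc, ⟨⟨fun y => ⟨hw0 y, hw1 y⟩, ⟨y₁, hwnorm⟩, hwsupp⟩, hwusc⟩⟩
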